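/- Let M₀ be a positive semidefinite 2×2 Hermitian matrix and let U_φ = exp(-i φ σ_z). Suppose that for every 2×2 density matrix ρ (positive semidefinite with trace 1), the integral (1/π)∫₀^π tr[ρ U_φ* M₀ U_φ] dφ equals 1. Then M₀ = 𝟙 + k_x σ_x + k_y σ_y for some real k_x, k_y with k_x² + k_y² ≤ 1. -/

import Mathlib

open Matrix Complex
open scoped Matrix Kronecker Real ComplexOrder

noncomputable section

/-- The Pauli matrix `σ_x`. -/
def σx : Matrix (Fin 2) (Fin 2) ℂ := !![0, 1; 1, 0]
/-- The Pauli matrix `σ_y`. -/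
def σy : Matrix (Fin 2) (Fin 2) ℂ := !![0, -Complex.I; Complex.I, 0]
/-- The Pauli matrix `σ_z`. -/
def σz : Matrix (Fin 2) (Fin 2) ℂ := !![1, 0; 0, -1]

/-- `U φ = exp(-i φ σ_z)`, the unitary rotation about the z-axis. -/
def U (φ : ℝ) : Matrix (Fin 2) (Fin 2) ℂ :=
  NormedSpace.exp ((-(Complex.I * (φ : ℂ))) • σz)

/-- The rotationally covariant POVM density `M_φ^r = (1/π) U_φ* (𝟙 + r σ_x) U_φ`. -/
def Mpovm (r φ : ℝ) : Matrix (Fin 2) (Fin 2) ℂ :=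
  ((π : ℂ))⁻¹ • ((U φ)ᴴ * ((1 : Matrix (Fin 2) (Fin 2) ℂ) + (r : ℂ) • σx) * U φ)

/-- A density matrix: positive semidefinite with unit trace. -/
def IsDensity {n : Type*} [Fintype n] [DecidableEq n] (ρ : Matrix n n ℂ) : Prop :=
  ρ.PosSemidef ∧ ρ.trace = 1

/-- The singlet vector `|Ψ⁻⟩ = (|01⟩ - |10⟩)/√2`. -/
def ψminus : Fin 2 × Fin 2 → ℂ := fun p =>
  if p = (0, 1) then (Real.sqrt 2)⁻¹ else if p = (1, 0) then -(Real.sqrt 2)⁻¹ else 0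

/-- The projector `|Ψ⁻⟩⟨Ψ⁻|`. -/
def singletProj : Matrix (Fin 2 × Fin 2) (Fin 2 × Fin 2) ℂ :=
  Matrix.vecMulVec ψminus (fun j => (starRingEnd ℂ) (ψminus j))

/-- The Werner state `W_f = f |Ψ⁻⟩⟨Ψ⁻| + ((1-f)/4) 𝟙₄`. -/
def Werner (f : ℝ) : Matrix (Fin 2 × Fin 2) (Fin 2 × Fin 2) ℂ :=
  (f : ℂ) • singletProj + (((1 - f) / 4 : ℝ) : ℂ) • (1 : Matrix (Fin 2 × Fin 2) (Fin 2 × Fin 2) ℂ)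

lemma hU (φ : ℝ) : U φ = Matrix.diagonal ![Complex.exp (-(Complex.I * φ)), Complex.exp (Complex.I * φ)] := by
  have h1 : ((-(Complex.I * (φ : ℂ))) • σz) = Matrix.diagonal ![-(Complex.I * φ), Complex.I * φ] := by
    ext i j; fin_cases i <;> fin_cases j <;> simp [σz, Matrix.diagonal]
  rw [U, h1, Matrix.exp_diagonal]
  ext i j
  fin_cases i <;> fin_cases j <;> simp [Matrix.diagonal, Pi.exp_def, Complex.exp_eq_exp_ℂ]

lemma tr1 (φ : ℝ) (M : Matrix (Fin 2) (Fin 2) ℂ) :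
    (!![(1:ℂ),0;0,0] * ((U φ)ᴴ * M * U φ)).trace = M 0 0 := by
  rw [hU]
  simp [Matrix.trace_fin_two, Matrix.mul_apply, Fin.sum_univ_two, Matrix.conjTranspose_apply,
    Matrix.diagonal, Matrix.vecMul, dotProduct, ← Complex.exp_conj, ← Complex.exp_add]
  rw [mul_right_comm, ← Complex.exp_add]; simp

lemma tr2 (φ : ℝ) (M : Matrix (Fin 2) (Fin 2) ℂ) :
    (!![(0:ℂ),0;0,1] * ((U φ)ᴴ * M * U φ)).trace = M 1 1 := by
  rw [hU]
  simp [Matrix.trace_fin_two, Matrix.mul_apply, Fin.sum_univ_two, Matrix.conjTranspose_apply,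
    Matrix.diagonal, Matrix.vecMul, dotProduct, ← Complex.exp_conj, ← Complex.exp_add]
  rw [mul_right_comm, ← Complex.exp_add]; simp

lemma dens1 : IsDensity !![(1:ℂ),0;0,0] := by
  refine ⟨Matrix.posSemidef_iff_dotProduct_mulVec.mpr ⟨?_, ?_⟩, by simp [Matrix.trace_fin_two]⟩
  · ext i j; fin_cases i <;> fin_cases j <;> simp [Matrix.conjTranspose_apply]
  · intro x
    have : star x ⬝ᵥ (!![(1:ℂ),0;0,0] *ᵥ x) = star (x 0) * x 0 := by
      simp [Matrix.mulVec, dotProduct, Fin.sum_univ_two]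
    rw [this]
    exact star_mul_self_nonneg _

lemma dens2 : IsDensity !![(0:ℂ),0;0,1] := by
  refine ⟨Matrix.posSemidef_iff_dotProduct_mulVec.mpr ⟨?_, ?_⟩, by simp [Matrix.trace_fin_two]⟩
  · ext i j; fin_cases i <;> fin_cases j <;> simp [Matrix.conjTranspose_apply]
  · intro x
    have : star x ⬝ᵥ (!![(0:ℂ),0;0,1] *ᵥ x) = star (x 1) * x 1 := by
      simp [Matrix.mulVec, dotProduct, Fin.sum_univ_two]
    rw [this]
    exact star_mul_self_nonneg _


/-- if a positive semidefinite `M₀` yields total probability 1,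
`(1/π) ∫₀^π tr[ρ U_φ* M₀ U_φ] dφ = 1`, for every density matrix `ρ`, then
`M₀ = 𝟙 + k_x σ_x + k_y σ_y` with `k_x² + k_y² ≤ 1`. -/
theorem roc_normalization_characterizes_M0 (M₀ : Matrix (Fin 2) (Fin 2) ℂ)
    (hM₀ : M₀.PosSemidef)
    (hnorm : ∀ ρ : Matrix (Fin 2) (Fin 2) ℂ, IsDensity ρ →
      ((π : ℂ))⁻¹ * ∫ φ in (0:ℝ)..π, (ρ * ((U φ)ᴴ * M₀ * U φ)).trace = 1) :
    ∃ kx ky : ℝ, kx ^ 2 + ky ^ 2 ≤ 1 ∧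
      M₀ = (1 : Matrix (Fin 2) (Fin 2) ℂ) + (kx : ℂ) • σx + (ky : ℂ) • σy := by

  have hπ : ((π : ℂ)) ≠ 0 := by
    exact_mod_cast Complex.ofReal_ne_zero.mpr Real.pi_ne_zero
  have key : ∀ (c : ℂ), ((π : ℂ))⁻¹ * ((π - 0 : ℝ) • c) = c := by
    intro c
    rw [sub_zero, Complex.real_smul, ← mul_assoc, inv_mul_cancel₀ hπ, one_mul]
  have h00 : M₀ 0 0 = 1 := by
    have h := hnorm _ dens1
    simp_rw [tr1] at h
    rwa [intervalIntegral.integral_const, key] at h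
  have h11 : M₀ 1 1 = 1 := by
    have h := hnorm _ dens2
    simp_rw [tr2] at h
    rwa [intervalIntegral.integral_const, key] at h
  set m : ℂ := M₀ 0 1 with hm
  have h10 : M₀ 1 0 = star m := by
    have := hM₀.1
    rw [Matrix.IsHermitian] at this
    have := congrFun (congrFun this 1) 0
    rw [← this, Matrix.conjTranspose_apply]
  -- quadratic form with x = ![m, -1]
  have hq := hM₀.dotProduct_mulVec_nonneg ![m, -1]
  have hqval : star (![m, -1]) ⬝ᵥ (M₀ *ᵥ ![m, -1]) = 1 - star m * m := by
    simp [Matrix.mulVec, dotProduct, Fin.sum_univ_two, h00, h11, h10]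
    ring
  rw [hqval] at hq
  have hnormSq : Complex.normSq m ≤ 1 := by
    have h1 := (Complex.le_def.mp hq).1
    simp [Complex.normSq_apply, Complex.mul_re] at h1 ⊢
    linarith
  refine ⟨m.re, -m.im, ?_, ?_⟩
  · have : m.re ^ 2 + (-m.im) ^ 2 = Complex.normSq m := by
      simp [Complex.normSq_apply]; ring
    linarith [hnormSq, this.ge, this.le]
  · ext i j
    fin_cases i <;> fin_cases j <;>
      simp [σx, σy, h00, h11, h10, ← hm, Matrix.one_apply, Complex.ext_iff]
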